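/- The formula with reversal φ₂ = x y₁ y₂ x · ȳ₁ · ȳ₂ is 5-avoidable; in fact, letting ρ : {1,2}* → {1,2}* be the morphism with ρ(1) = 22 and ρ(2) = 21 and W = ρ^∞(2) its infinite fixed point starting with 2, the 5-cyclic W-word C₅(W) is an infinite word over 5 letters all of whose finite prefixes avoid φ₂. -/

import Mathlib

/-- A word `w` *encounters* the formula with reversal
`φ_k = x y₁ ⋯ y_k x · ȳ₁ · ⋯ · ȳ_k` if there are nonempty words `X, Y₁, …, Y_k`
such that `X Y₁ ⋯ Y_k X` is a factor of `w` and each reversed `Yᵢ` is a factor of `w`. -/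
def Encounters {A : Type*} (k : ℕ) (w : List A) : Prop :=
  ∃ (X : List A) (Ys : List (List A)),
    Ys.length = k ∧ X ≠ [] ∧ (∀ Y ∈ Ys, Y ≠ []) ∧
    (X ++ Ys.flatten ++ X) <:+: w ∧ (∀ Y ∈ Ys, Y.reverse <:+: w)

/-- A word avoids the formula with reversal `φ_k`. -/
def Avoids {A : Type*} (k : ℕ) (w : List A) : Prop := ¬ Encounters k w

/-- A word is square-free if it has no factor `u ++ u` with `u` nonempty. -/
def SquareFree {A : Type*} (w : List A) : Prop :=
  ∀ u : List A, u ≠ [] → ¬ (u ++ u) <:+: w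

/-- Auxiliary function building the `m`-cyclic `w`-word starting at block index `i`. -/
def cyclicWordFrom {A : Type*} (m : ℕ) (a : ℕ → A) : ℕ → List ℕ → List A
  | _, [] => []
  | i, x :: xs => List.replicate x (a (i % m)) ++ cyclicWordFrom m a (i + 1) xs

/-- The `m`-cyclic `w`-word `C_m(w)` on letters `a 0, …, a (m-1)`:
`(a 0)^{w₁} (a 1)^{w₂} ⋯ (a (m-1))^{w_m} (a 0)^{w_{m+1}} ⋯`. -/
def cyclicWord {A : Type*} (m : ℕ) (a : ℕ → A) (w : List ℕ) : List A :=
  cyclicWordFrom m a 0 w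

/-- `w` (a word over `{1,…,k+1}`) contains a forbidden `(k,m)`-factor:
a factor `x' α₁ ⋯ α_j x''` with `1 ≤ j ≤ k`, each `αᵢ` a letter of `{1,…,k+1}`,
`α₁+⋯+α_j ≥ k`, `|x'| = |x''| = n ≡ m - j (mod m)`, `x'₁ ≥ x''₁`, `x'ₙ ≤ x''ₙ`, and
`x'ᵢ = x''ᵢ` for `i ∈ {2,…,n-1}` (1-indexed). -/
def ForbiddenFactor (k m : ℕ) (w : List ℕ) : Prop :=
  ∃ x' α x'' : List ℕ,
    (x' ++ α ++ x'') <:+: w ∧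
    1 ≤ α.length ∧ α.length ≤ k ∧
    (∀ c ∈ α, 1 ≤ c ∧ c ≤ k + 1) ∧
    k ≤ α.sum ∧
    x'.length = x''.length ∧
    x'.length % m = (m - α.length) % m ∧
    x''.getD 0 0 ≤ x'.getD 0 0 ∧
    x'.getD (x'.length - 1) 0 ≤ x''.getD (x''.length - 1) 0 ∧
    ∀ i, 0 < i → i < x'.length - 1 → x'.getD i 0 = x''.getD i 0

/-- The 8-uniform morphism `f` with `f(0)=11112122`, `f(1)=12112222`, `f(2)=21111222`. -/
def fMorph (v : List ℕ) : List ℕ :=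
  v.flatMap fun c =>
    if c = 0 then [1,1,1,1,2,1,2,2]
    else if c = 1 then [1,2,1,1,2,2,2,2]
    else [2,1,1,1,1,2,2,2]

/-- Image of a letter under the morphism `ρ` with `ρ(1)=22`, `ρ(2)=21`. -/
def rhoLetter (c : ℕ) : List ℕ := if c = 1 then [2,2] else [2,1]

/-- The morphism `ρ : {1,2}* → {1,2}*` with `ρ(1)=22`, `ρ(2)=21`. -/
def rhoWord (v : List ℕ) : List ℕ := v.flatMap rhoLetter

/-- The morphism `d_k` with `d_k(i) = i^{k+1}` for `i ∈ {0,1,2}`. -/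
def dMorph (k : ℕ) (w : List ℕ) : List ℕ := w.flatMap fun i => List.replicate (k + 1) i

/-- The morphism `g` with `g(i) = i·a·b`, where the letters `a, b` are coded `3, 4`. -/
def gMorph (w : List ℕ) : List ℕ := w.flatMap fun i => [i, 3, 4]

/-- The morphism `g'` with `g'(i) = i·a·b·c·d`, where `a,b,c,d` are coded `3,4,5,6`. -/
def g'Morph (w : List ℕ) : List ℕ := w.flatMap fun i => [i, 3, 4, 5, 6]

/-- Insert the letter `c` after every `t` letters of `l`. -/
def insertEvery {A : Type*} (c : A) (t : ℕ) (l : List A) : List A :=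
  if _h : l.length ≤ t ∨ t = 0 then l
  else l.take t ++ c :: insertEvery c t (l.drop t)
termination_by l.length
decreasing_by
  simp only [List.length_drop]
  omega

/-- `φ_k` is `n`-avoidable: infinitely many finite words over an `n`-letter alphabet avoid it. -/
def IsNAvoidable (k n : ℕ) : Prop := {w : List (Fin n) | Avoids k w}.Infinite


namespace PhiTwo

section Wfacts
variable (W : ℕ → ℕ) (hWfix : ∀ n, rhoLetter (W n) = [W (2 * n), W (2 * n + 1)])
include hWfix

theorem Wpair (m : ℕ) : W (2 * m) = 2 ∧ (W (2 * m + 1) = 2 ↔ W m = 1) ∧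
    (W (2 * m + 1) = 1 ∨ W (2 * m + 1) = 2) := by
  have h := hWfix m
  unfold rhoLetter at h
  split at h <;>
  · simp only [List.cons.injEq, and_true] at h
    omega

theorem Weven (m : ℕ) : W (2 * m) = 2 := (Wpair W hWfix m).1

theorem Wodd1 (m : ℕ) : W (2 * m + 1) = 2 ↔ W m = 1 := (Wpair W hWfix m).2.1

theorem Wval (n : ℕ) : W n = 1 ∨ W n = 2 := by
  rcases Nat.even_or_odd n with ⟨m, hm⟩ | ⟨m, hm⟩
  · right; rw [hm, ← two_mul]; exact Weven W hWfix m
  · rw [hm]; exact (Wpair W hWfix m).2.2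

theorem no11 (y : ℕ) : ¬ (W y = 1 ∧ W (y + 1) = 1) := by
  rcases Nat.even_or_odd y with ⟨m, hm⟩ | ⟨m, hm⟩
  · rw [hm, ← two_mul, Weven W hWfix m]; simp
  · have : y + 1 = 2 * (m + 1) := by omega
    rw [this, Weven W hWfix (m+1)]; simp

/-- odd-position decoding: equality of two odd-position letters descends. -/
theorem Wodd_eq {m m' : ℕ} (h : W (2 * m + 1) = W (2 * m' + 1)) : W m = W m' := by
  rcases Wval W hWfix m with h1 | h1 <;> rcases Wval W hWfix m' with h2 | h2 <;>
    rw [h1, h2] <;> first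
    | rfl
    | (exfalso
       have a1 := (Wodd1 W hWfix m)
       have a2 := (Wodd1 W hWfix m')
       omega)

/-- No `3·2^k` consecutive equalities `W x = W (x + 2^k·e)` for odd `e`. -/
theorem norun : ∀ (k : ℕ) (e s : ℕ), Odd e →
    ¬ (∀ i < 3 * 2 ^ k, W (s + i) = W (s + i + 2 ^ k * e)) := by
  intro k
  induction k with
  | zero =>
    intro e s he h
    simp only [pow_zero, one_mul] at h
    -- all six positions are 2
    have key : ∀ i < 3, W (s + i) = 2 ∧ W (s + i + e) = 2 := by
      intro i hi
      have heq := h i (by omega)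
      rcases Nat.even_or_odd (s + i) with ⟨m, hm⟩ | ⟨m, hm⟩
      · have h1 : W (s + i) = 2 := by rw [hm, ← two_mul]; exact Weven W hWfix m
        exact ⟨h1, by omega⟩
      · have : ∃ m', s + i + e = 2 * m' := by
          rcases he with ⟨c, hc⟩; exact ⟨m + c + 1, by omega⟩
        rcases this with ⟨m', hm'⟩
        have h2 : W (s + i + e) = 2 := by rw [hm']; exact Weven W hWfix m'
        exact ⟨by omega, h2⟩
    -- a run of three 2's starts at an even position
    have even3 : ∀ x, W x = 2 → W (x + 1) = 2 → W (x + 2) = 2 → Even x := by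
      intro x h0 _ h2
      by_contra hodd
      rcases Nat.not_even_iff_odd.mp hodd with ⟨m, hm⟩
      have e0 : W m = 1 := (Wodd1 W hWfix m).mp (by rw [hm] at h0; exact h0)
      have e2 : W (m + 1) = 1 := by
        have : x + 2 = 2 * (m + 1) + 1 := by omega
        exact (Wodd1 W hWfix (m+1)).mp (by rw [← this]; exact h2)
      exact no11 W hWfix m ⟨e0, e2⟩
    have k0 := key 0 (by norm_num); have k1 := key 1 (by norm_num)
    have k2 := key 2 (by norm_num)
    have hs : Even s := even3 s (by simpa using k0.1) (by simpa using k1.1) (by simpa using k2.1)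
    have hse : Even (s + e) := even3 (s + e)
      (by have := k0.2; simpa using this)
      (by rw [show s + e + 1 = s + 1 + e by omega]; exact k1.2)
      (by rw [show s + e + 2 = s + 2 + e by omega]; exact k2.2)
    rcases he with ⟨c, hc⟩
    rcases hs with ⟨u, hu⟩; rcases hse with ⟨v, hv⟩
    omega
  | succ k ih =>
    intro e s he h
    apply ih e (s / 2 + if s % 2 = 0 then 0 else 0) he
    -- the smallest y with 2y+1 ≥ s is s/2
    intro i hi
    have hx : 2 * (s / 2 + i) + 1 < s + 3 * 2 ^ (k + 1) ∧ s ≤ 2 * (s / 2 + i) + 1 := by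
      constructor <;> [skip; omega]
      have : 2 * (s / 2) ≤ s := by omega
      calc 2 * (s / 2 + i) + 1 = 2 * (s / 2) + 2 * i + 1 := by ring
        _ < s + 3 * 2 ^ (k+1) := by
            have hp : 2 ^ (k+1) = 2 * 2 ^ k := by ring
            omega
    have heq := h (2 * (s / 2 + i) + 1 - s) (by omega)
    have hrw : s + (2 * (s / 2 + i) + 1 - s) = 2 * (s / 2 + i) + 1 := by omega
    rw [hrw] at heq
    have hrw2 : 2 * (s / 2 + i) + 1 + 2 ^ (k + 1) * e = 2 * (s / 2 + i + 2 ^ k * e) + 1 := by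
      have hp : 2 ^ (k+1) * e = 2 * (2 ^ k * e) := by ring
      omega
    rw [hrw2] at heq
    simpa using Wodd_eq W hWfix heq

theorem d5 (s : ℕ) (h1 : W (s + 1) = W (s + 6)) (h2 : W (s + 5) ≤ W s)
    (h3 : W (s + 2) ≤ W (s + 7)) : False := by
  have wv : ∀ n, W n = 1 ∨ W n = 2 := Wval W hWfix
  rcases Nat.even_or_odd s with ⟨m, hm⟩ | ⟨m, hm⟩
  · have hm' : s = 2 * m := by omega
    -- s even
    have e6 : W (s + 6) = 2 := by rw [show s + 6 = 2 * (m + 3) by omega]; exact Weven W hWfix _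
    have e1 : W m = 1 := (Wodd1 W hWfix m).mp (by rw [show 2 * m + 1 = s + 1 by omega]; omega)
    have e2 : W (s + 2) = 2 := by rw [show s + 2 = 2 * (m + 1) by omega]; exact Weven W hWfix _
    have e7 : W (m + 3) = 1 := (Wodd1 W hWfix (m + 3)).mp
      (by rw [show 2 * (m + 3) + 1 = s + 7 by omega]; have := wv (s + 7); omega)
    rcases Nat.even_or_odd m with ⟨u, hu⟩ | ⟨u, hu⟩
    · have : W m = 2 := by rw [show m = 2 * u by omega]; exact Weven W hWfix _
      omega
    · have : W (m + 3) = 2 := by rw [show m + 3 = 2 * (u + 2) by omega]; exact Weven W hWfix _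
      omega
  · -- s odd
    have e5 : W (s + 5) = 2 := by rw [show s + 5 = 2 * (m + 3) by omega]; exact Weven W hWfix _
    have es : W s = 2 := by have := wv s; omega
    have e0 : W m = 1 := (Wodd1 W hWfix m).mp (by rw [show 2 * m + 1 = s by omega]; exact es)
    have e1 : W (s + 1) = 2 := by rw [show s + 1 = 2 * (m + 1) by omega]; exact Weven W hWfix _
    have e6 : W (m + 3) = 1 := (Wodd1 W hWfix (m + 3)).mp
      (by rw [show 2 * (m + 3) + 1 = s + 6 by omega]; omega)
    rcases Nat.even_or_odd m with ⟨u, hu⟩ | ⟨u, hu⟩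
    · have : W m = 2 := by rw [show m = 2 * u by omega]; exact Weven W hWfix _
      omega
    · have : W (m + 3) = 2 := by rw [show m + 3 = 2 * (u + 2) by omega]; exact Weven W hWfix _
      omega

theorem core (s d j : ℕ) (h5 : d % 5 = 0) (hd : 0 < d) (hj1 : 1 ≤ j) (hj2 : j ≤ 2)
    (hC1 : ∀ i, 1 ≤ i → i + j + 2 ≤ d → W (s + i) = W (s + d + i))
    (hC2 : W (s + d) ≤ W s)
    (hC3 : W (s + (d - j - 1)) ≤ W (s + d + (d - j - 1))) : False := by
  obtain ⟨k, e, he, rfl⟩ : ∃ k e, ¬ 2 ∣ e ∧ d = 2 ^ k * e := by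
    obtain ⟨k, e, he, hd⟩ := Nat.exists_eq_pow_mul_and_not_dvd (n := d) (by omega) 2 (by norm_num)
    exact ⟨k, e, he, hd⟩
  have he' : Odd e := Nat.odd_iff.mpr (by omega)
  have he5 : e % 5 = 0 := by
    have h25 : Nat.Coprime 5 (2 ^ k) := Nat.Coprime.pow_right k (by norm_num)
    have h51 : (5 : ℕ) ∣ 2 ^ k * e := Nat.dvd_of_mod_eq_zero h5
    have := Nat.Coprime.dvd_of_dvd_mul_left h25 h51
    omega
  have hegef : 5 ≤ e := by omega
  by_cases hbig : 3 * 2 ^ k + j + 2 ≤ 2 ^ k * e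
  · apply norun W hWfix k e (s + 1) he'
    intro i hi
    have := hC1 (1 + i) (by omega) (by omega)
    rw [show s + 1 + i + 2 ^ k * e = s + 2 ^ k * e + (1 + i) by omega,
        show s + 1 + i = s + (1 + i) by omega]
    exact this
  · -- small case: k = 0, e = 5, d = 5
    have hk : k = 0 ∧ e = 5 := by
      rcases Nat.eq_zero_or_pos k with rfl | hkpos
      · simp only [pow_zero, one_mul] at hbig
        exact ⟨rfl, by omega⟩
      · exfalso
        have h2 : 2 ^ 1 ≤ 2 ^ k := Nat.pow_le_pow_right (by norm_num) hkpos
        have h5e : 2 ^ k * 5 ≤ 2 ^ k * e := Nat.mul_le_mul_left _ hegef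
        simp only [pow_one] at h2
        omega
    obtain ⟨hk0, he5'⟩ := hk
    subst hk0 he5'
    simp only [pow_zero, one_mul] at hC1 hC2 hC3 ⊢
    apply d5 W hWfix s
    · have := hC1 1 (by omega) (by omega)
      rw [show s + 5 + 1 = s + 6 by omega] at this; exact this
    · rw [show s + 5 = s + 5 + 0 by omega] at hC2 ⊢; simpa using hC2
    · have hj : j = 1 ∨ j = 2 := by omega
      rcases hj with rfl | rfl
      · have := hC1 2 (by omega) (by omega)
        rw [show s + 5 + 2 = s + 7 by omega] at this; omega
      · have := hC3
        rw [show s + (5 - 2 - 1) = s + 2 by omega, show s + 5 + (5 - 2 - 1) = s + 7 by omega] at this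
        exact this

end Wfacts

section Blocks
variable (W : ℕ → ℕ)

/-- Partial sums of `W`. -/
def S : ℕ → ℕ
  | 0 => 0
  | b + 1 => S b + W b

/-- Block index of position `p`. -/
def blk (p : ℕ) : ℕ := Nat.findGreatest (fun b => S W b ≤ p) (p + 1)

variable (hW1 : ∀ n, 1 ≤ W n) (hW2 : ∀ n, W n ≤ 2)

theorem S_succ (b : ℕ) : S W (b + 1) = S W b + W b := rfl

include hW1 in
theorem S_lt_succ (b : ℕ) : S W b < S W (b + 1) := by
  have := hW1 b; rw [S_succ]; omega

include hW1 in
theorem S_mono {b c : ℕ} (h : b ≤ c) : S W b ≤ S W c := by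
  induction c with
  | zero => have hb : b = 0 := by omega
            subst hb; rfl
  | succ c ih =>
      rcases Nat.eq_or_lt_of_le h with rfl | h'
      · rfl
      · have := ih (by omega); have := S_lt_succ W hW1 c; omega

include hW1 in
theorem S_smono {b c : ℕ} (h : b < c) : S W b < S W c := by
  have := S_lt_succ W hW1 b
  have := S_mono W hW1 (show b + 1 ≤ c by omega)
  omega

include hW1 in
theorem le_S (b : ℕ) : b ≤ S W b := by
  induction b with
  | zero => omega
  | succ b ih => have := S_lt_succ W hW1 b; omega

include hW1 in
theorem S_add_ge (x t : ℕ) : S W x + t ≤ S W (x + t) := by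
  induction t with
  | zero => simp
  | succ t ih => have := S_lt_succ W hW1 (x + t); rw [show x + (t+1) = (x+t)+1 by omega]; omega

include hW2 in
theorem S_add_le (x t : ℕ) : S W (x + t) ≤ S W x + 2 * t := by
  induction t with
  | zero => simp
  | succ t ih =>
      have := hW2 (x + t)
      rw [show x + (t+1) = (x+t)+1 by omega, S_succ]; omega

theorem blk_le (p : ℕ) : S W (blk W p) ≤ p := by
  rcases Nat.eq_zero_or_pos (blk W p) with h | h
  · rw [h]; exact Nat.zero_le p
  · exact Nat.findGreatest_spec (P := fun b => S W b ≤ p) (m := 0) (by omega) (by simp [S])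

include hW1 in
theorem blk_le_self (p : ℕ) : blk W p ≤ p := by
  have h1 := blk_le W p
  have h2 := le_S W hW1 (blk W p)
  omega

include hW1 in
theorem blk_lt (p : ℕ) : p < S W (blk W p + 1) := by
  by_contra h
  push_neg at h
  have h2 : blk W p + 1 ≤ Nat.findGreatest (fun b => S W b ≤ p) (p + 1) :=
    Nat.le_findGreatest (by have := blk_le_self W hW1 p; omega) h
  have : Nat.findGreatest (fun b => S W b ≤ p) (p + 1) = blk W p := rfl
  omega

include hW1 in
theorem blk_eq {p b : ℕ} (h1 : S W b ≤ p) (h2 : p < S W (b + 1)) : blk W p = b := by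
  have hl := blk_le W p
  have hr := blk_lt W hW1 p
  rcases Nat.lt_trichotomy (blk W p) b with h | h | h
  · have := S_mono W hW1 (show blk W p + 1 ≤ b by omega); omega
  · exact h
  · have := S_mono W hW1 (show b + 1 ≤ blk W p by omega); omega

include hW1 in
theorem blk_mono {p q : ℕ} (h : p ≤ q) : blk W p ≤ blk W q := by
  by_contra hc
  push_neg at hc
  have h1 := S_mono W hW1 (show blk W q + 1 ≤ blk W p by omega)
  have h2 := blk_le W p
  have h3 := blk_lt W hW1 q
  omega

include hW1 in
theorem blk_succ_le (p : ℕ) : blk W (p + 1) ≤ blk W p + 1 := by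
  by_contra hc
  push_neg at hc
  have h1 := S_mono W hW1 (show blk W p + 1 + 1 ≤ blk W (p + 1) by omega)
  have h2 := blk_le W (p + 1)
  have h3 := blk_lt W hW1 p
  have h4 := S_lt_succ W hW1 (blk W p + 1)
  omega

include hW1 in
theorem blk_succ (p : ℕ) : blk W (p + 1) = blk W p ∨ blk W (p + 1) = blk W p + 1 := by
  have h1 := blk_mono W hW1 (show p ≤ p + 1 by omega)
  have h2 := blk_succ_le W hW1 p
  omega

include hW1 in
theorem blk_width {p q : ℕ} (h : blk W p = blk W q) (hpq : p ≤ q) : q - p < W (blk W p) := by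
  have h1 := blk_le W p
  have h2 := blk_lt W hW1 q
  rw [← h] at h2
  rw [S_succ] at h2
  omega

include hW1 in
theorem blk_intermediate (p : ℕ) : ∀ t c, blk W p ≤ c → c ≤ blk W (p + t) →
    ∃ r, r ≤ t ∧ blk W (p + r) = c := by
  intro t
  induction t with
  | zero => intro c h1 h2; exact ⟨0, by omega, by simp at h2 ⊢; omega⟩
  | succ t ih =>
      intro c h1 h2
      by_cases hc : c ≤ blk W (p + t)
      · obtain ⟨r, hr, hr2⟩ := ih c h1 hc
        exact ⟨r, by omega, hr2⟩
      · have := blk_succ_le W hW1 (p + t)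
        rw [show p + t + 1 = p + (t + 1) by omega] at this
        exact ⟨t + 1, by omega, by omega⟩

end Blocks

section Alphabet
variable {A : Type*} (a : ℕ → A) (W : ℕ → ℕ)

/-- The infinite cyclic word as a letter function. -/
def om (p : ℕ) : A := a (blk W p % 5)

variable (ha : Set.InjOn a (Set.Iio 5)) (hW1 : ∀ n, 1 ≤ W n)

include ha in
theorem inj5 {b c : ℕ} (h : a (b % 5) = a (c % 5)) : b % 5 = c % 5 :=
  ha (Set.mem_Iio.mpr (Nat.mod_lt _ (by norm_num)))
     (Set.mem_Iio.mpr (Nat.mod_lt _ (by norm_num))) h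

include ha hW1 in
theorem om_step_eq {p : ℕ} (h : om a W p = om a W (p + 1)) : blk W (p + 1) = blk W p := by
  rcases blk_succ W hW1 p with h1 | h1
  · exact h1
  · exfalso
    unfold om at h
    rw [h1] at h
    have := inj5 a ha h
    omega

include hW1 in
theorem om_step_ne {p : ℕ} (h : om a W p ≠ om a W (p + 1)) : blk W (p + 1) = blk W p + 1 := by
  rcases blk_succ W hW1 p with h1 | h1
  · exfalso; exact h (by unfold om; rw [h1])
  · exact h1

theorem cwf_append (m : ℕ) (x : ℕ) : ∀ (xs : List ℕ) (i : ℕ),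
    cyclicWordFrom m a i (xs ++ [x]) =
      cyclicWordFrom m a i xs ++ List.replicate x (a ((i + xs.length) % m)) := by
  intro xs
  induction xs with
  | nil => intro i; simp [cyclicWordFrom]
  | cons y ys ih =>
      intro i
      have hc : (y :: ys) ++ [x] = y :: (ys ++ [x]) := rfl
      rw [hc]
      show List.replicate y (a (i % m)) ++ cyclicWordFrom m a (i + 1) (ys ++ [x]) =
        (List.replicate y (a (i % m)) ++ cyclicWordFrom m a (i + 1) ys) ++
          List.replicate x (a ((i + (y :: ys).length) % m))
      rw [ih (i + 1), List.append_assoc, List.length_cons,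
        show i + 1 + ys.length = i + (ys.length + 1) by omega]

include hW1 in
theorem cw_eq (N : ℕ) :
    cyclicWord 5 a ((List.range N).map W) = (List.range (S W N)).map (om a W) := by
  induction N with
  | zero => simp [cyclicWord, cyclicWordFrom, S]
  | succ N ih =>
      rw [List.range_succ, List.map_append]
      unfold cyclicWord at ih ⊢
      simp only [List.map_cons, List.map_nil]
      rw [cwf_append a, ih]
      rw [S_succ, List.range_add, List.map_append]
      have hrep : List.map (om a W) (List.map (fun x => S W N + x) (List.range (W N))) =
          List.replicate (W N) (a (N % 5)) := by
        apply List.ext_getElem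
        · simp
        · intro i h1 h2
          simp only [List.getElem_map, List.getElem_range, List.getElem_replicate]
          have hi : i < W N := by simpa using h2
          have hbk : blk W (S W N + i) = N :=
            blk_eq W hW1 (Nat.le_add_right _ _) (by rw [S_succ]; omega)
          unfold om
          rw [hbk]
      simp only [List.length_map, List.length_range, Nat.zero_add]
      rw [← hrep, List.map_map]

omit hW1 in
include ha in
theorem read_pos {u s t : List A} {n : ℕ}
    (h : (List.range n).map (om a W) = s ++ (u ++ t)) (i : ℕ) (hi : i < u.length) :
    u[i] = om a W (s.length + i) := by
  have hlen : n = s.length + (u.length + t.length) := by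
    have := congrArg List.length h
    simpa using this
  have hb : s.length + i < n := by omega
  have key : ((List.range n).map (om a W))[s.length + i]'(by simpa using hb)
      = om a W (s.length + i) := by
    simp
  have key' := List.getElem_of_eq h (by simpa using hb :
    s.length + i < ((List.range n).map (om a W)).length)
  have key2 := key'.symm.trans key
  rw [List.getElem_append_right (by omega)] at key2
  rw [List.getElem_append_left] at key2
  · simpa using key2
  · omega

theorem gcon {α : Type*} {l : List α} {i j : ℕ} (hij : i = j) (hj : j < l.length) :
    l[i]'(by rw [hij]; exact hj) = l[j] := by subst hij; rfl

theorem chain_const {α : Type*} {u : List α}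
    (hadj : ∀ r, ∀ (h : r + 1 < u.length), u[r]'(by omega) = u[r+1]) :
    ∀ r (h : r < u.length), u[r] = u[0]'(by omega) := by
  intro r
  induction r with
  | zero => intro h; rfl
  | succ r ih => intro h; rw [← hadj r h]; exact ih (by omega)

include ha hW1 in
theorem rev_const {o o' : ℕ} {Z : List A}
    (hZ : ∀ r (h : r < Z.length), Z[r] = om a W (o + r))
    (hZr : ∀ r (h : r < Z.length), Z.reverse[r]'(by simpa using h) = om a W (o' + r)) :
    ∀ r, ∀ (h : r + 1 < Z.length), Z[r]'(by omega) = Z[r+1] := by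
  intro r h
  by_contra hne
  have e1 : om a W (o + r) ≠ om a W (o + r + 1) := by
    rw [← hZ r (by omega), show o + r + 1 = o + (r + 1) by omega, ← hZ (r+1) h]
    exact hne
  have hb1 : blk W (o + r + 1) = blk W (o + r) + 1 := om_step_ne a W hW1 e1
  set m := Z.length with hm
  have hr2 : m - 2 - r < m := by omega
  have hr3 : m - 2 - r + 1 < m := by omega
  have q1 : om a W (o' + (m - 2 - r)) = om a W (o + (r + 1)) := by
    have h1 := hZr (m - 2 - r) hr2
    rw [List.getElem_reverse] at h1
    have h2 : Z[Z.length - 1 - (m - 2 - r)]'(by omega) = Z[r+1] := gcon (by omega) h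
    exact h1.symm.trans (h2.trans (hZ (r+1) h))
  have q2 : om a W (o' + (m - 2 - r) + 1) = om a W (o + r) := by
    rw [show o' + (m - 2 - r) + 1 = o' + (m - 2 - r + 1) by omega]
    have h1 := hZr (m - 2 - r + 1) hr3
    rw [List.getElem_reverse] at h1
    have h2 : Z[Z.length - 1 - (m - 2 - r + 1)]'(by omega) = Z[r] := gcon (by omega) (by omega)
    exact h1.symm.trans (h2.trans (hZ r (by omega)))
  unfold om at q1 q2
  rw [show o + (r + 1) = o + r + 1 by omega, hb1] at q1
  have m1 := inj5 a ha q1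
  rcases blk_succ W hW1 (o' + (m - 2 - r)) with hcc | hcc
  · rw [hcc] at q2
    have m2 := inj5 a ha q2
    omega
  · rw [hcc] at q2
    have m2 := inj5 a ha q2
    omega

set_option maxHeartbeats 1600000 in
include ha hW1 in
theorem main_pos (hW2 : ∀ n, W n ≤ 2)
    (hWfix : ∀ n, rhoLetter (W n) = [W (2 * n), W (2 * n + 1)])
    (p ℓ g m₁ q : ℕ) (hℓ1 : 1 ≤ ℓ) (hm₁ : 1 ≤ m₁) (hm₂ : m₁ < g)
    (hq : q = p + ℓ + g)
    (hXw : ∀ r, r < ℓ → om a W (p + r) = om a W (q + r))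
    (hgap : ∀ r, r < g → om a W (p + ℓ + r) = om a W (p + ℓ) ∨
      om a W (p + ℓ + r) = om a W (p + ℓ + m₁)) : False := by
  -- Step 1: the gap spans at most two blocks
  have hgb : blk W (p + ℓ + (g - 1)) ≤ blk W (p + ℓ) + 1 := by
    by_contra hc
    push_neg at hc
    obtain ⟨r2, hr2, hb2⟩ := blk_intermediate W hW1 (p + ℓ) (g - 1) (blk W (p + ℓ) + 1)
      (by omega) (by omega)
    obtain ⟨r3, hr3, hb3⟩ := blk_intermediate W hW1 (p + ℓ) (g - 1) (blk W (p + ℓ) + 2)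
      (by omega) (by omega)
    have l2 := hgap r2 (by omega)
    have l3 := hgap r3 (by omega)
    unfold om at l2 l3
    rw [hb2] at l2
    rw [hb3] at l3
    rcases l2 with l2 | l2
    · have := inj5 a ha l2; omega
    · rcases l3 with l3 | l3
      · have := inj5 a ha l3; omega
      · have := inj5 a ha (l3.trans l2.symm); omega
  by_cases hconst : ∀ r, r + 1 < ℓ → om a W (p + r) = om a W (p + (r + 1))
  · -- Case A : X is constant
    have hbconst : ∀ r, r < ℓ → blk W (p + r) = blk W p := by
      intro r
      induction r with
      | zero => intro _; simp
      | succ r ih =>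
          intro h
          have h1 := om_step_eq a W ha hW1 (p := p + r)
            (by rw [show p + r + 1 = p + (r + 1) by omega]; exact hconst r (by omega))
          rw [show p + r + 1 = p + (r + 1) by omega] at h1
          rw [h1]; exact ih (by omega)
    have hpq : om a W p = om a W q := by
      have := hXw 0 (by omega); simpa using this
    have hmod : blk W p % 5 = blk W q % 5 := inj5 a ha hpq
    have hle : blk W p ≤ blk W q := blk_mono W hW1 (by omega)
    rcases Nat.eq_or_lt_of_le hle with heq | hlt
    · have := blk_width W hW1 heq (by omega)
      have := hW2 (blk W p)
      omega
    · have h5 : blk W p + 5 ≤ blk W q := by omega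
      have h1 : blk W (p + (ℓ - 1)) = blk W p := hbconst (ℓ - 1) (by omega)
      have h2 : blk W (p + ℓ) ≤ blk W p + 1 := by
        have := blk_succ_le W hW1 (p + (ℓ - 1))
        rw [show p + (ℓ - 1) + 1 = p + ℓ by omega] at this
        omega
      have h3 : blk W q ≤ blk W (p + ℓ + (g - 1)) + 1 := by
        have := blk_succ_le W hW1 (p + ℓ + (g - 1))
        rw [show p + ℓ + (g - 1) + 1 = q by omega] at this
        exact this
      omega
  · -- Case B : X has a descent
    push_neg at hconst
    obtain ⟨i, hi, hne⟩ := hconst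
    have hbp : blk W (p + i + 1) = blk W (p + i) + 1 := by
      apply om_step_ne a W hW1
      rw [show p + i + 1 = p + (i + 1) by omega]
      exact hne
    have hneq : om a W (q + i) ≠ om a W (q + (i + 1)) := by
      rw [← hXw i (by omega), ← hXw (i + 1) (by omega)]
      exact hne
    have hbq : blk W (q + i + 1) = blk W (q + i) + 1 := by
      apply om_step_ne a W hW1
      rw [show q + i + 1 = q + (i + 1) by omega]
      exact hneq
    have hmodi : blk W (p + i) % 5 = blk W (q + i) % 5 := by
      have := hXw i (by omega); unfold om at this; exact inj5 a ha this
    have hgei : blk W (p + i) + 1 ≤ blk W (q + i) := by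
      have := blk_mono W hW1 (show p + i + 1 ≤ q + i by omega)
      omega
    set E := blk W (q + i) - blk W (p + i) with hEdef
    have hEi : blk W (q + i) = blk W (p + i) + E := by omega
    have hE5 : E % 5 = 0 := by omega
    have hE5' : 5 ≤ E := by omega
    -- alignment of blocks along the two occurrences of X
    have up : ∀ t, i + t < ℓ → blk W (q + (i + t)) = blk W (p + (i + t)) + E := by
      intro t
      induction t with
      | zero => intro _; simpa using hEi
      | succ t ih =>
          intro h
          have ihh := ih (by omega)
          have hmm := hXw (i + t + 1) (by omega)
          unfold om at hmm
          have hmm5 := inj5 a ha hmm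
          have c1 := blk_succ W hW1 (p + (i + t))
          have c2 := blk_succ W hW1 (q + (i + t))
          rw [show p + (i + t) + 1 = p + (i + t + 1) by omega] at c1
          rw [show q + (i + t) + 1 = q + (i + t + 1) by omega] at c2
          rw [show i + (t + 1) = i + t + 1 by omega]
          omega
    have down : ∀ t, t ≤ i → blk W (q + (i - t)) = blk W (p + (i - t)) + E := by
      intro t
      induction t with
      | zero => intro _; simpa using hEi
      | succ t ih =>
          intro h
          have ihh := ih (by omega)
          have hmm := hXw (i - (t + 1)) (by omega)
          unfold om at hmm
          have hmm5 := inj5 a ha hmm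
          have c1 := blk_succ W hW1 (p + (i - (t + 1)))
          have c2 := blk_succ W hW1 (q + (i - (t + 1)))
          rw [show p + (i - (t + 1)) + 1 = p + (i - t) by omega] at c1
          rw [show q + (i - (t + 1)) + 1 = q + (i - t) by omega] at c2
          omega
    have AL : ∀ r, r < ℓ → blk W (q + r) = blk W (p + r) + E := by
      intro r hr
      rcases le_or_gt i r with hir | hir
      · have := up (r - i) (by omega)
        rw [show i + (r - i) = r by omega] at this
        exact this
      · have := down (i - r) (by omega)
        rw [show i - (i - r) = r by omega] at this
        exact this
    set s := blk W p with hsdef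
    set b₂ := blk W (p + (ℓ - 1)) with hb₂def
    have hALq : blk W q = s + E := by
      have := AL 0 (by omega); simpa using this
    have hAL2 : blk W (q + (ℓ - 1)) = b₂ + E := AL (ℓ - 1) (by omega)
    have hsb : s + 1 ≤ b₂ := by
      have h1 : s ≤ blk W (p + i) := blk_mono W hW1 (by omega)
      have h2 : blk W (p + i + 1) ≤ b₂ := blk_mono W hW1 (by omega)
      omega
    have hb₂lt : b₂ + 1 ≤ s + E := by
      by_contra hcc
      push_neg at hcc
      have h1 : b₂ ≤ blk W q := blk_mono W hW1 (by omega)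
      have heq2 : b₂ = blk W q := by omega
      rw [hb₂def] at heq2
      have := blk_width W hW1 heq2 (by omega)
      have := hW2 (blk W (p + (ℓ - 1)))
      omega
    -- boundary alignment
    have SB : ∀ c, s < c → c ≤ b₂ → S W (c + E) = S W c + (ℓ + g) := by
      intro c hc1 hc2
      have hSc1 : p + 1 ≤ S W c := by
        have u1 := S_mono W hW1 (show s + 1 ≤ c by omega)
        have u2 := blk_lt W hW1 p
        rw [← hsdef] at u2
        omega
      have hSc2 : S W c ≤ p + (ℓ - 1) := by
        have u1 := S_mono W hW1 hc2
        have u2 := blk_le W (p + (ℓ - 1))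
        rw [← hb₂def] at u2
        omega
      have hbr : blk W (p + (S W c - p)) = c := by
        rw [show p + (S W c - p) = S W c by omega]
        exact blk_eq W hW1 le_rfl (S_lt_succ W hW1 c)
      have hbr1 : blk W (p + (S W c - p - 1)) = c - 1 := by
        rw [show p + (S W c - p - 1) = S W c - 1 by omega]
        apply blk_eq W hW1
        · have := S_lt_succ W hW1 (c - 1)
          rw [show c - 1 + 1 = c by omega] at this
          omega
        · rw [show c - 1 + 1 = c by omega]
          omega
      have a1 := AL (S W c - p) (by omega)
      have a2 := AL (S W c - p - 1) (by omega)
      rw [hbr] at a1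
      rw [hbr1] at a2
      have u1 : S W (c + E) ≤ q + (S W c - p) := by
        have := blk_le W (q + (S W c - p)); rw [a1] at this; exact this
      have u2 : q + (S W c - p - 1) < S W (c - 1 + E + 1) := by
        have := blk_lt W hW1 (q + (S W c - p - 1)); rw [a2] at this; exact this
      rw [show c - 1 + E + 1 = c + E by omega] at u2
      omega
    -- interior equalities
    have H1 : ∀ iV, 1 ≤ iV → s + iV + 1 ≤ b₂ → W (s + iV) = W (s + E + iV) := by
      intro iV h1 h2
      have e1 := SB (s + iV) (by omega) (by omega)
      have e2 := SB (s + iV + 1) (by omega) (by omega)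
      have w1 : S W (s + iV + 1) = S W (s + iV) + W (s + iV) := S_succ W _
      have w2 : S W (s + iV + E + 1) = S W (s + iV + E) + W (s + iV + E) := S_succ W _
      rw [show s + iV + 1 + E = s + iV + E + 1 by omega] at e2
      rw [show s + E + iV = s + iV + E by omega]
      omega
    -- head quantities
    have hhp : p < S W (s + 1) := by have := blk_lt W hW1 p; rw [← hsdef] at this; exact this
    have hsp : S W s ≤ p := by have := blk_le W p; rw [← hsdef] at this; exact this
    have hss : S W (s + 1) = S W s + W s := S_succ W s
    have hE1 : S W (s + 1 + E) = S W (s + 1) + (ℓ + g) := SB (s + 1) (by omega) hsb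
    have hqS : S W (s + E) ≤ q := by have := blk_le W q; rw [hALq] at this; exact this
    have hqS2 : q < S W (s + E + 1) := by have := blk_lt W hW1 q; rw [hALq] at this; exact this
    have hsE1 : S W (s + E + 1) = S W (s + E) + W (s + E) := S_succ W _
    have hv : (q - S W (s + E)) + (S W (s + 1) - p) = W (s + E) := by
      rw [show s + 1 + E = s + E + 1 by omega] at hE1
      omega
    -- tail quantities
    have htb : S W b₂ ≤ p + (ℓ - 1) := by have := blk_le W (p + (ℓ - 1)); rw [← hb₂def] at this; exact this
    have htb2 : p + (ℓ - 1) < S W (b₂ + 1) := by have := blk_lt W hW1 (p + (ℓ - 1)); rw [← hb₂def] at this; exact this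
    have hSb2E : S W (b₂ + E) = S W b₂ + (ℓ + g) := SB b₂ (by omega) le_rfl
    have hq2 : q + (ℓ - 1) < S W (b₂ + E + 1) := by
      have := blk_lt W hW1 (q + (ℓ - 1)); rw [hAL2] at this; exact this
    have hb2s : S W (b₂ + 1) = S W b₂ + W b₂ := S_succ W _
    have hbE2 : S W (b₂ + E + 1) = S W (b₂ + E) + W (b₂ + E) := S_succ W _
    -- block of p + ℓ
    have hu : (blk W (p + ℓ) = b₂ ∧ p + ℓ < S W (b₂ + 1)) ∨
        (blk W (p + ℓ) = b₂ + 1 ∧ S W (b₂ + 1) = p + ℓ) := by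
      rcases Nat.lt_or_ge (p + ℓ) (S W (b₂ + 1)) with hcase | hcase
      · left
        exact ⟨blk_eq W hW1 (by omega) hcase, hcase⟩
      · right
        have heq : S W (b₂ + 1) = p + ℓ := by omega
        refine ⟨blk_eq W hW1 (by omega) ?_, heq⟩
        have := S_lt_succ W hW1 (b₂ + 1)
        omega
    -- block of q - 1
    have hvb : (blk W (p + ℓ + (g - 1)) = s + E ∧ S W (s + E) + 1 ≤ q) ∨
        (blk W (p + ℓ + (g - 1)) = s + E - 1 ∧ S W (s + E) = q) := by
      rcases Nat.lt_or_ge (S W (s + E)) q with hcase | hcase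
      · left
        refine ⟨?_, by omega⟩
        apply blk_eq W hW1 (by omega)
        rw [show p + ℓ + (g - 1) = q - 1 by omega]
        omega
      · right
        have heq : S W (s + E) = q := by omega
        refine ⟨?_, heq⟩
        apply blk_eq W hW1
        · have := S_lt_succ W hW1 (s + E - 1)
          rw [show s + E - 1 + 1 = s + E by omega] at this
          omega
        · rw [show s + E - 1 + 1 = s + E by omega]
          omega
    -- middle block sum bounds
    have hM1 : S W (b₂ + 1) ≤ S W (s + E) := S_mono W hW1 (by omega)
    have hM2 : S W (s + E) ≤ S W (b₂ + 1) + 2 * (s + E - (b₂ + 1)) := by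
      have := S_add_le W hW2 (b₂ + 1) (s + E - (b₂ + 1))
      rw [show b₂ + 1 + (s + E - (b₂ + 1)) = s + E by omega] at this
      exact this
    have hws := hW2 s
    have hwsE := hW2 (s + E)
    have hwb2 := hW2 b₂
    have hwb2E := hW2 (b₂ + E)
    have hw1s := hW1 s
    have hw1sE := hW1 (s + E)
    have hw1b2 := hW1 b₂
    have hw1b2E := hW1 (b₂ + E)
    -- final case analysis
    have hd0 : 0 < E := by omega
    -- C2 holds when v = 0, C3-at-b₂ holds when u = 0
    have hC2fact : S W (s + E) = q → W (s + E) ≤ W s := by intro hveq; omega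
    have hC3fact : S W (b₂ + 1) = p + ℓ → W b₂ ≤ W (b₂ + E) := by intro hueq; omega
    have hub : S W (b₂ + 1) - (p + ℓ) ≤ 1 := by omega
    have hvbd : q - S W (s + E) ≤ 1 := by omega
    rcases hu with ⟨hu1, hupos⟩ | ⟨hu1, hueq⟩
    · -- u ≥ 1
      rcases hvb with ⟨hv1, hvpos⟩ | ⟨hv1, hveq⟩
      · -- u ≥ 1, v ≥ 1 : jj = 0
        have hjj : b₂ = s + E - 1 := by omega
        apply core W hWfix (s + 1) E 2 hE5 hd0 (by omega) (by omega)
        · intro iV h1 h2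
          have := H1 (iV + 1) (by omega) (by omega)
          rw [show s + 1 + iV = s + (iV + 1) by omega,
            show s + 1 + E + iV = s + E + (iV + 1) by omega]
          exact this
        · have := H1 1 (by omega) (by omega)
          rw [show s + 1 + E = s + E + 1 by omega]
          exact this.symm.le
        · have := H1 (E - 2) (by omega) (by omega)
          rw [show s + 1 + (E - 2 - 1) = s + (E - 2) by omega,
            show s + 1 + E + (E - 2 - 1) = s + E + (E - 2) by omega]
          exact this.le
      · -- u ≥ 1, v = 0 : jj = 1
        have hjj : b₂ = s + E - 2 := by omega
        apply core W hWfix s E 2 hE5 hd0 (by omega) (by omega)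
        · intro iV h1 h2
          exact H1 iV h1 (by omega)
        · exact hC2fact hveq
        · have := H1 (E - 3) (by omega) (by omega)
          rw [show s + (E - 2 - 1) = s + (E - 3) by omega,
            show s + E + (E - 2 - 1) = s + E + (E - 3) by omega]
          exact this.le
    · -- u = 0
      rcases hvb with ⟨hv1, hvpos⟩ | ⟨hv1, hveq⟩
      · -- u = 0, v ≥ 1 : jj = 1
        have hjj : b₂ = s + E - 2 := by omega
        apply core W hWfix (s + 1) E 2 hE5 hd0 (by omega) (by omega)
        · intro iV h1 h2
          have := H1 (iV + 1) (by omega) (by omega)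
          rw [show s + 1 + iV = s + (iV + 1) by omega,
            show s + 1 + E + iV = s + E + (iV + 1) by omega]
          exact this
        · have := H1 1 (by omega) (by omega)
          rw [show s + 1 + E = s + E + 1 by omega]
          exact this.symm.le
        · have := hC3fact hueq
          rw [show s + 1 + (E - 2 - 1) = b₂ by omega,
            show s + 1 + E + (E - 2 - 1) = b₂ + E by omega]
          exact this
      · -- u = 0, v = 0 : jj ∈ {1, 2}
        have hjrange : 1 ≤ s + E - 1 - b₂ ∧ s + E - 1 - b₂ ≤ 2 := by omega
        set jj := s + E - 1 - b₂ with hjjdef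
        apply core W hWfix s E jj hE5 hd0 (by omega) (by omega)
        · intro iV h1 h2
          exact H1 iV h1 (by omega)
        · exact hC2fact hveq
        · have := hC3fact hueq
          rw [show s + (E - jj - 1) = b₂ by omega,
            show s + E + (E - jj - 1) = b₂ + E by omega]
          exact this

set_option maxHeartbeats 800000 in
include ha in
theorem avoid (hWfix : ∀ n, rhoLetter (W n) = [W (2 * n), W (2 * n + 1)]) (N : ℕ) :
    ¬ Encounters 2 (cyclicWord 5 a ((List.range N).map W)) := by
  have hW1' : ∀ n, 1 ≤ W n := fun n => by rcases Wval W hWfix n with h | h <;> omega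
  have hW2 : ∀ n, W n ≤ 2 := fun n => by rcases Wval W hWfix n with h | h <;> omega
  rintro ⟨X, Ys, hlen, hXne, hYne, hinf, hrev⟩
  obtain ⟨Y₁, Y₂, rfl⟩ := List.length_eq_two.mp hlen
  rw [cw_eq a W hW1' N] at hinf hrev
  obtain ⟨sl, tl, hw⟩ := hinf
  have hfl : [Y₁, Y₂].flatten = Y₁ ++ Y₂ := by simp
  rw [hfl] at hw
  set n := S W N with hn
  set p := sl.length with hp
  set ℓ := X.length with hℓdef
  set m₁ := Y₁.length with hm₁def
  set m₂ := Y₂.length with hm₂def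
  have hℓ1 : 1 ≤ ℓ := List.length_pos_iff.mpr hXne
  have hm₁1 : 1 ≤ m₁ := List.length_pos_iff.mpr (hYne Y₁ (by simp))
  have hm₂1 : 1 ≤ m₂ := List.length_pos_iff.mpr (hYne Y₂ (by simp))
  -- reading the four components
  have hXw : ∀ r (h : r < ℓ), X[r] = om a W (p + r) := by
    intro r h
    exact read_pos a W ha (u := X)
      (show _ = sl ++ (X ++ ((Y₁ ++ Y₂) ++ (X ++ tl))) by rw [← hw]; simp) r h
  have hY1 : ∀ r (h : r < m₁), Y₁[r] = om a W (p + ℓ + r) := by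
    intro r h
    have := read_pos a W ha (u := Y₁) (s := sl ++ X)
      (show _ = (sl ++ X) ++ (Y₁ ++ (Y₂ ++ (X ++ tl))) by rw [← hw]; simp) r h
    simpa using this
  have hY2 : ∀ r (h : r < m₂), Y₂[r] = om a W (p + ℓ + m₁ + r) := by
    intro r h
    have := read_pos a W ha (u := Y₂) (s := sl ++ X ++ Y₁)
      (show _ = (sl ++ X ++ Y₁) ++ (Y₂ ++ (X ++ tl)) by rw [← hw]; simp) r h
    rw [this]
    congr 1
    simp only [List.length_append]
    rfl
  have hXq : ∀ r (h : r < ℓ), X[r] = om a W (p + ℓ + (m₁ + m₂) + r) := by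
    intro r h
    have := read_pos a W ha (u := X) (s := sl ++ X ++ Y₁ ++ Y₂)
      (show _ = (sl ++ X ++ Y₁ ++ Y₂) ++ (X ++ tl) by rw [← hw]; simp) r h
    rw [this]
    congr 1
    simp [hp, hℓdef, hm₁def, hm₂def]
    omega
  -- reversals give constancy of Y₁ and Y₂
  have hrev1 := hrev Y₁ (by simp)
  have hrev2 := hrev Y₂ (by simp)
  obtain ⟨s1, t1, hwr1⟩ := hrev1
  obtain ⟨s2, t2, hwr2⟩ := hrev2
  have hr1 : ∀ r (h : r < Y₁.reverse.length), Y₁.reverse[r] = om a W (s1.length + r) := by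
    intro r h
    exact read_pos a W ha (u := Y₁.reverse)
      (show _ = s1 ++ (Y₁.reverse ++ t1) by rw [← hwr1]; simp) r h
  have hr2 : ∀ r (h : r < Y₂.reverse.length), Y₂.reverse[r] = om a W (s2.length + r) := by
    intro r h
    exact read_pos a W ha (u := Y₂.reverse)
      (show _ = s2 ++ (Y₂.reverse ++ t2) by rw [← hwr2]; simp) r h
  have hc1 : ∀ r (h : r < m₁), Y₁[r] = Y₁[0]'(by omega) :=
    chain_const (rev_const a W ha hW1' hY1 (fun r h => hr1 r (by simpa using h)))
  have hc2 : ∀ r (h : r < m₂), Y₂[r] = Y₂[0]'(by omega) :=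
    chain_const (rev_const a W ha hW1' hY2 (fun r h => hr2 r (by simpa using h)))
  -- assemble hypotheses of main_pos
  apply main_pos a W ha hW1' hW2 hWfix p ℓ (m₁ + m₂) m₁ (p + ℓ + (m₁ + m₂))
    hℓ1 hm₁1 (by omega) rfl
  · intro r hr
    rw [← hXw r hr, ← hXq r hr]
  · intro r hr
    rcases Nat.lt_or_ge r m₁ with hcase | hcase
    · left
      calc om a W (p + ℓ + r) = Y₁[r]'(hcase) := (hY1 r hcase).symm
        _ = Y₁[0]'(by omega) := hc1 r hcase
        _ = om a W (p + ℓ + 0) := hY1 0 (by omega)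
        _ = om a W (p + ℓ) := by rw [Nat.add_zero]
    · right
      have hrb : r - m₁ < m₂ := by omega
      calc om a W (p + ℓ + r) = om a W (p + ℓ + m₁ + (r - m₁)) := by
              rw [show p + ℓ + r = p + ℓ + m₁ + (r - m₁) by omega]
        _ = Y₂[r - m₁]'(hrb) := (hY2 (r - m₁) hrb).symm
        _ = Y₂[0]'(by omega) := hc2 (r - m₁) hrb
        _ = om a W (p + ℓ + m₁ + 0) := hY2 0 (by omega)
        _ = om a W (p + ℓ + m₁) := by rw [Nat.add_zero]

end Alphabet

end PhiTwo



/-- `φ₂` is 5-avoidable; in fact, for `W = ρ^∞(2)` the 5-cyclic `W`-word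
`C₅(W)` (on distinct letters `a 0, …, a 4`) has all of its finite prefixes avoiding `φ₂`
(equivalently, the 5-cyclic word of every finite prefix of `W` avoids `φ₂`). -/
theorem phi_two_five_avoidable {A : Type*} (a : ℕ → A) (ha : Set.InjOn a (Set.Iio 5))
    (W : ℕ → ℕ) (hW0 : W 0 = 2)
    (hWfix : ∀ n, rhoLetter (W n) = [W (2 * n), W (2 * n + 1)]) :
    {w : List (Fin 5) | Avoids 2 w}.Infinite ∧
    ∀ N, Avoids 2 (cyclicWord 5 a ((List.range N).map W)) := by
  have hW1 : ∀ n, 1 ≤ W n := fun n => by rcases PhiTwo.Wval W hWfix n with h | h <;> omega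
  constructor
  · have ha' : Set.InjOn (fun i : ℕ => (⟨i % 5, by omega⟩ : Fin 5)) (Set.Iio 5) := by
      intro x hx y hy hxy
      simp only [Set.mem_Iio] at hx hy
      have : x % 5 = y % 5 := by simpa using congrArg Fin.val hxy
      omega
    apply Set.infinite_of_injective_forall_mem
      (f := fun N => cyclicWord 5 (fun i : ℕ => (⟨i % 5, by omega⟩ : Fin 5))
        ((List.range N).map W))
    · intro N M hNM
      have hl := congrArg List.length hNM
      dsimp only at hl
      rw [PhiTwo.cw_eq _ W hW1 N, PhiTwo.cw_eq _ W hW1 M] at hl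
      simp only [List.length_map, List.length_range] at hl
      by_contra hne
      rcases Nat.lt_or_ge N M with hc | hc
      · have := PhiTwo.S_smono W hW1 hc; omega
      · have := PhiTwo.S_smono W hW1 (show M < N by omega); omega
    · intro N
      exact PhiTwo.avoid _ W ha' hWfix N
  · intro N
    exact PhiTwo.avoid a W ha hWfix N
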